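/- Let n ≥ 1, let M be a nonempty connected smooth n-manifold without boundary, and let f : M → ℝⁿ × ℝ be a smooth immersion which is spacelike, i.e. Q(d fₓ(v)) > 0 for every x ∈ M and every nonzero tangent vector v ∈ TₓM, where Q(y,t) = ‖y‖² − t² is the Minkowski quadratic form on ℝⁿ × ℝ. Assume the length-completeness property: every smooth map w : [0,1) → M for which the Minkowski lengths ∫₀ˢ √(Q((f∘w)′(t))) dt, s < 1, are uniformly bounded admits a continuous extension to a map [0,1] → M. Then f is a smooth embedding of M into ℝⁿ × ℝ, and pr ∘ f : M → ℝⁿ is a diffeomorphism. -/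

import Mathlib

open Manifold

/-- The Minkowski quadratic form `Q(y,t) = ‖y‖² − t²` on `ℝⁿ × ℝ`. -/
noncomputable def minkowskiQ (n : ℕ) (p : EuclideanSpace ℝ (Fin n) × ℝ) : ℝ :=
  ‖p.1‖ ^ 2 - p.2 ^ 2

open Set Topology Metric Function

namespace SpacelikeAux

variable {n : ℕ} {M : Type*} [TopologicalSpace M]
  [ChartedSpace (EuclideanSpace ℝ (Fin n)) M] [IsManifold (𝓡 n) (⊤ : ℕ∞) M]

local notation "E" => EuclideanSpace ℝ (Fin n)
local notation "I" => 𝓡 n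

/-- Inverse function theorem, manifold version: a smooth map with everywhere bijective
differential is a local diffeomorphism. -/
theorem isLocalDiffeomorph_of_bijective_mfderiv {g : M → E} (hg : ContMDiff I I (⊤ : ℕ∞) g)
    (hbij : ∀ x : M, Function.Bijective (mfderiv I I g x)) :
    IsLocalDiffeomorph I I (⊤ : ℕ∞) g := by
  intro x
  set φ : OpenPartialHomeomorph M E := chartAt E x with hφ
  have hφsymm : ContMDiffOn I I (⊤ : ℕ∞) φ.symm φ.target := contMDiffOn_chart_symm
  set F : E → E := g ∘ φ.symm with hF
  have hFsm : ContMDiffOn I I (⊤ : ℕ∞) F φ.target := hg.comp_contMDiffOn hφsymm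
  have hFcd := hFsm.contDiffOn
  -- the derivative of F at any point of φ.target is bijective
  have key : ∀ z ∈ φ.target, ∃ D : E ≃L[ℝ] E, HasFDerivAt F (D : E →L[ℝ] E) z := by
    intro z hz
    set x' : M := φ.symm z with hx'def
    have hx's : x' ∈ φ.source := φ.map_target hz
    have hφx' : φ x' = z := φ.right_inv hz
    have hmφsymm : MDifferentiableAt I I φ.symm z :=
      (hφsymm.contMDiffAt (φ.open_target.mem_nhds hz)).mdifferentiableAt (by simp)
    have hmφ : MDifferentiableAt I I φ x' :=
      (contMDiffOn_chart.contMDiffAt (φ.open_source.mem_nhds hx's)).mdifferentiableAt (by simp : ((⊤ : ℕ∞) : WithTop ℕ∞) ≠ 0)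
    have hmg : MDifferentiableAt I I g x' := (hg x').mdifferentiableAt (by simp)
    -- mfderiv of φ.symm is bijective
    have hcomp1 : (mfderiv I I φ.symm z).comp (mfderiv I I (φ : M → E) x')
        = ContinuousLinearMap.id ℝ (TangentSpace I x') := by
      have h1 : (φ.symm ∘ φ : M → M) =ᶠ[nhds x'] id :=
        Filter.eventuallyEq_of_mem (φ.open_source.mem_nhds hx's) fun y hy => φ.left_inv hy
      have hmφsymm' := hmφsymm
      rw [← hφx'] at hmφsymm'
      have h2 : mfderiv I I (φ.symm ∘ φ : M → M) x'
          = (mfderiv I I φ.symm (φ x')).comp (mfderiv I I (φ : M → E) x') :=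
        mfderiv_comp x' hmφsymm' hmφ
      rw [hφx'] at h2
      rw [← h2, h1.mfderiv_eq, mfderiv_id]
    have hcomp2 : (mfderiv I I (φ : M → E) x').comp (mfderiv I I φ.symm z)
        = ContinuousLinearMap.id ℝ (TangentSpace I z) := by
      have h1 : ((φ : M → E) ∘ φ.symm : E → E) =ᶠ[nhds z] id :=
        Filter.eventuallyEq_of_mem (φ.open_target.mem_nhds hz) fun y hy => φ.right_inv hy
      have h2 : mfderiv I I ((φ : M → E) ∘ φ.symm : E → E) z
          = (mfderiv I I (φ : M → E) x').comp (mfderiv I I φ.symm z) :=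
        mfderiv_comp z hmφ hmφsymm
      rw [← h2, h1.mfderiv_eq, mfderiv_id]
    have hbij1 : Function.Bijective (mfderiv I I φ.symm z) := by
      constructor
      · intro v w hvw
        have := congrArg (mfderiv I I (φ : M → E) x') hvw
        rw [← ContinuousLinearMap.comp_apply, ← ContinuousLinearMap.comp_apply, hcomp2] at this
        exact this
      · intro v
        refine ⟨mfderiv I I (φ : M → E) x' v, ?_⟩
        have := congrFun (congrArg (fun (L : _ →L[ℝ] _) => (L : TangentSpace I x' → TangentSpace I x')) hcomp1) v
        exact this
    have hFd : mfderiv I I F z = (mfderiv I I g x').comp (mfderiv I I φ.symm z) :=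
      mfderiv_comp z hmg hmφsymm
    have hFbij : Function.Bijective (mfderiv I I F z) := by
      rw [hFd]
      exact (hbij x').comp hbij1
    have hFdiff : DifferentiableAt ℝ F z :=
      ((hFcd.contDiffAt (φ.open_target.mem_nhds hz)).differentiableAt (by simp))
    have hmfd : mfderiv I I F z = fderiv ℝ F z := mfderiv_eq_fderiv
    rw [hmfd] at hFbij
    refine ⟨LinearEquiv.toContinuousLinearEquiv (LinearEquiv.ofBijective
      ((fderiv ℝ F z).toLinearMap) hFbij), ?_⟩
    have : (LinearEquiv.toContinuousLinearEquiv (LinearEquiv.ofBijective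
        ((fderiv ℝ F z).toLinearMap) hFbij) : E →L[ℝ] E) = fderiv ℝ F z := by
      apply ContinuousLinearMap.ext
      intro v
      rfl
    rw [this]
    exact hFdiff.hasFDerivAt
  -- set up the IFT partial homeomorphism at `a = φ x`
  have hxs : x ∈ φ.source := mem_chart_source E x
  have haT : φ x ∈ φ.target := φ.map_source hxs
  obtain ⟨Da, hDa⟩ := key (φ x) haT
  have hFa := hFcd.contDiffAt (φ.open_target.mem_nhds haT)
  set P₀ : OpenPartialHomeomorph E E := hFa.toOpenPartialHomeomorph F hDa (by simp) with hP₀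
  have haP₀ : φ x ∈ P₀.source := hFa.mem_toOpenPartialHomeomorph_source hDa (by simp)
  set Q : OpenPartialHomeomorph E E := P₀.restr φ.target with hQdef
  have hQcoe : (Q : E → E) = F := rfl
  have hQsrc : Q.source = P₀.source ∩ φ.target := P₀.restr_source' _ φ.open_target
  have haQ : φ x ∈ Q.source := hQsrc ▸ ⟨haP₀, haT⟩
  have hQsymm : ∀ y ∈ Q.target, ContMDiffAt I I (⊤ : ℕ∞) Q.symm y := by
    intro y hy
    have hzQ : Q.symm y ∈ Q.source := Q.map_target hy
    have hzT : Q.symm y ∈ φ.target := (hQsrc ▸ hzQ).2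
    obtain ⟨D, hD⟩ := key (Q.symm y) hzT
    have hcd := hFcd.contDiffAt (φ.open_target.mem_nhds hzT)
    have hsymm : ContDiffAt ℝ (⊤ : ℕ∞) Q.symm y := Q.contDiffAt_symm hy hD hcd
    exact hsymm.contMDiffAt
  set T : OpenPartialHomeomorph M E := φ.trans Q with hT
  have hTsrc : T.source = φ.source ∩ φ ⁻¹' Q.source := φ.trans_source Q
  have hTtgt : T.target = Q.target ∩ Q.symm ⁻¹' φ.target := φ.trans_target Q
  have hgT : Set.EqOn g T T.source := by
    intro z hzT'
    have h1 : (T : M → E) z = F (φ z) := rfl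
    have h2 : F (φ z) = g (φ.symm (φ z)) := rfl
    rw [h1, h2, φ.left_inv (hTsrc ▸ hzT').1]
  refine ⟨⟨T.toPartialEquiv, T.open_source, T.open_target, ?_, ?_⟩, ?_, ?_⟩
  · exact hg.contMDiffOn.congr fun z hz => (hgT hz).symm
  · -- smoothness of the inverse
    intro y hy
    have hyQ : y ∈ Q.target := (hTtgt ▸ hy).1
    have hyφ : Q.symm y ∈ φ.target := (hTtgt ▸ hy).2
    have h1 : ContMDiffAt I I (⊤ : ℕ∞) φ.symm (Q.symm y) :=
      hφsymm.contMDiffAt (φ.open_target.mem_nhds hyφ)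
    have h2 : ContMDiffAt I I (⊤ : ℕ∞) (φ.symm ∘ Q.symm) y := h1.comp y (hQsymm y hyQ)
    have h3 : T.toPartialEquiv.invFun = φ.symm ∘ Q.symm := rfl
    rw [h3]
    exact h2.contMDiffWithinAt
  · exact hTsrc ▸ ⟨hxs, haQ⟩
  · exact hgT

/-- The differential of the spatial projection of a spacelike immersion is bijective. -/
theorem mfderiv_fst_bijective {f : M → EuclideanSpace ℝ (Fin n) × ℝ}
    (hf : ContMDiff I 𝓘(ℝ, EuclideanSpace ℝ (Fin n) × ℝ) (⊤ : ℕ∞) f)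
    (hspace : ∀ (x : M) (v : TangentSpace I x), v ≠ 0 →
      0 < minkowskiQ n (mfderiv I 𝓘(ℝ, EuclideanSpace ℝ (Fin n) × ℝ) f x v)) (x : M) :
    Function.Bijective (mfderiv I I (fun y => (f y).1) x) := by
  set L := mfderiv I I (fun y => (f y).1) x with hL
  have hfd : MDifferentiableAt I 𝓘(ℝ, E × ℝ) f x := (hf x).mdifferentiableAt (by simp)
  have h1 : HasMFDerivAt 𝓘(ℝ, E × ℝ) 𝓘(ℝ, E) (Prod.fst : E × ℝ → E) (f x)
      (ContinuousLinearMap.fst ℝ E ℝ) := (ContinuousLinearMap.fst ℝ E ℝ).hasMFDerivAt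
  have hcomp : L = (ContinuousLinearMap.fst ℝ E ℝ).comp (mfderiv I 𝓘(ℝ, E × ℝ) f x) := by
    have h2 := mfderiv_comp x h1.mdifferentiableAt hfd
    rw [hL, show (fun y => (f y).1) = (Prod.fst ∘ f) from rfl, h2, h1.mfderiv]
    rfl
  have happ : ∀ v : TangentSpace I x, L v = (mfderiv I 𝓘(ℝ, E × ℝ) f x v).1 := by
    intro v; rw [hcomp]; rfl
  have hinj : Function.Injective L := by
    intro v w hvw
    by_contra hne
    have hsub : v - w ≠ 0 := sub_ne_zero.mpr hne
    have hQ := hspace x (v - w) hsub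
    have h0 : (mfderiv I 𝓘(ℝ, E × ℝ) f x (v - w)).1 = 0 := by
      rw [← happ, map_sub, hvw, sub_self]
      rfl
    rw [show minkowskiQ n (mfderiv I 𝓘(ℝ, E × ℝ) f x (v - w)) = ‖(mfderiv I 𝓘(ℝ, E × ℝ) f x (v - w)).1‖ ^ 2 - (mfderiv I 𝓘(ℝ, E × ℝ) f x (v - w)).2 ^ 2 from rfl, h0] at hQ
    simp only [norm_zero] at hQ
    nlinarith [sq_nonneg ((mfderiv I 𝓘(ℝ, E × ℝ) f x (v - w)).2)]
  haveI : FiniteDimensional ℝ (TangentSpace I x) :=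
    inferInstanceAs (FiniteDimensional ℝ (EuclideanSpace ℝ (Fin n)))
  constructor
  · exact hinj
  · exact (LinearMap.injective_iff_surjective (f := (L.toLinearMap : E →ₗ[ℝ] E))).mp hinj

section Lifting

variable [T2Space M]

/-- Pasting lemma for two sets, each avoiding the other's closure off the overlap. -/
theorem myContinuousOn_union' {α β : Type*} [TopologicalSpace α] [TopologicalSpace β]
    {s t : Set α} {F : α → β} (hs : ∀ x ∈ t, x ∉ s → x ∉ closure s)
    (ht : ∀ x ∈ s, x ∉ t → x ∉ closure t)
    (hFs : ContinuousOn F s) (hFt : ContinuousOn F t) : ContinuousOn F (s ∪ t) := by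
  intro x hx
  rcases hx with hxs | hxt
  · by_cases hxt : x ∈ t
    · exact (hFs x hxs).union (hFt x hxt)
    · exact (hFs x hxs).union (continuousWithinAt_of_notMem_closure (ht x hxs hxt))
  · by_cases hxs : x ∈ s
    · exact (hFs x hxs).union (hFt x hxt)
    · exact (continuousWithinAt_of_notMem_closure (hs x hxt hxs)).union (hFt x hxt)

/-- Pasting lemma for two closed sets. -/
theorem myContinuousOn_union {α β : Type*} [TopologicalSpace α] [TopologicalSpace β]
    {s t : Set α} {F : α → β} (hs : IsClosed s) (ht : IsClosed t)
    (hFs : ContinuousOn F s) (hFt : ContinuousOn F t) : ContinuousOn F (s ∪ t) :=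
  myContinuousOn_union' (fun x _ hx => by rwa [hs.closure_eq])
    (fun x _ hx => by rwa [ht.closure_eq]) hFs hFt

/-- Uniqueness of lifts through a local homeomorphism. -/
theorem lift_unique {g : M → E} (hlh : IsLocalHomeomorph g) {s : Set ℝ}
    (hs : IsPreconnected s) {γ₁ γ₂ : ℝ → M} (h₁ : ContinuousOn γ₁ s) (h₂ : ContinuousOn γ₂ s)
    (he : Set.EqOn (g ∘ γ₁) (g ∘ γ₂) s) {a : ℝ} (has : a ∈ s) (ha : γ₁ a = γ₂ a) :
    Set.EqOn γ₁ γ₂ s :=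
  (T2Space.isSeparatedMap g).eqOn_of_comp_eqOn hlh.isLocallyInjective hs h₁ h₂ he has ha

/-- A continuous lift of a smooth curve through a local diffeomorphism is smooth. -/
theorem lift_contMDiffOn {g : M → E} (hld : IsLocalDiffeomorph I I (⊤ : ℕ∞) g)
    {γ : ℝ → M} {s : Set ℝ} {p : ℝ → E} (hp : ContMDiff 𝓘(ℝ, ℝ) I (⊤ : ℕ∞) p)
    (hγ : ContinuousOn γ s) (hgp : ∀ t ∈ s, g (γ t) = p t) :
    ContMDiffOn 𝓘(ℝ, ℝ) I (⊤ : ℕ∞) γ s := by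
  intro t ht
  obtain ⟨Φ, hxΦ, hEq⟩ := hld (γ t)
  have hmem : γ ⁻¹' Φ.source ∈ nhdsWithin t s := (hγ t ht) (Φ.open_source.mem_nhds hxΦ)
  have hptarget : (p t) ∈ Φ.target := by
    rw [← hgp t ht, hEq hxΦ]
    exact Φ.toPartialEquiv.map_source hxΦ
  have hsymmAt : ContMDiffAt I I (⊤ : ℕ∞) Φ.symm (p t) :=
    Φ.symm.contMDiffOn.contMDiffAt (Φ.open_target.mem_nhds hptarget)
  have hcomp : ContMDiffWithinAt 𝓘(ℝ, ℝ) I (⊤ : ℕ∞) (fun u => Φ.symm (p u)) s t :=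
    hsymmAt.comp_contMDiffWithinAt t (hp t).contMDiffWithinAt
  refine hcomp.congr_of_eventuallyEq ?_ ?_
  · filter_upwards [hmem, self_mem_nhdsWithin] with u hu hus
    rw [← hgp u hus, hEq hu]
    exact (Φ.toPartialEquiv.left_inv hu).symm
  · rw [← hgp t ht, hEq hxΦ]
    exact (Φ.toPartialEquiv.left_inv hxΦ).symm

/-- Minkowski length bound for lifts of affine segments: the total Minkowski length of
`f ∘ w` is bounded by `‖d‖` when the spatial projection of `f ∘ w` is `t ↦ c + t • d`. -/
theorem length_bound {f : M → EuclideanSpace ℝ (Fin n) × ℝ}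
    {w : ℝ → M} {c d : EuclideanSpace ℝ (Fin n)}
    (hw : ContMDiffOn 𝓘(ℝ, ℝ) I (⊤ : ℕ∞) w (Set.Ico 0 1))
    (hproj : ∀ t ∈ Set.Ico (0:ℝ) 1, (f (w t)).1 = c + t • d) :
    ∃ C : ℝ, ∀ s ∈ Set.Ico (0:ℝ) 1,
      (∫ t in (0:ℝ)..s, Real.sqrt (minkowskiQ n (deriv (f ∘ w) t))) ≤ C := by
  refine ⟨‖d‖, fun s hs => ?_⟩
  set q : ℝ → ℝ := fun t => Real.sqrt (minkowskiQ n (deriv (f ∘ w) t)) with hqdef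
  have hqmeas : Measurable q := by
    have h1 : Continuous fun p : EuclideanSpace ℝ (Fin n) × ℝ => minkowskiQ n p := by
      unfold minkowskiQ
      exact ((continuous_norm.comp continuous_fst).pow 2).sub (continuous_snd.pow 2)
    exact Real.continuous_sqrt.measurable.comp (h1.measurable.comp (measurable_deriv _))
  have hqnonneg : ∀ t, 0 ≤ q t := fun t => Real.sqrt_nonneg _
  have hqbound : ∀ t ∈ Set.Ioc (0:ℝ) s, q t ≤ ‖d‖ := by
    intro t ht
    have ht01 : t ∈ Set.Ioo (0:ℝ) 1 := ⟨ht.1, lt_of_le_of_lt ht.2 hs.2⟩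
    by_cases hdiff : DifferentiableAt ℝ (f ∘ w) t
    · have h1 : HasDerivAt (f ∘ w) (deriv (f ∘ w) t) t := hdiff.hasDerivAt
      have hfst : HasDerivAt (fun u => ((f ∘ w) u).1) ((deriv (f ∘ w) t).1) t := h1.fst
      have haff : HasDerivAt (fun u : ℝ => c + u • d) d t := by
        simpa using ((hasDerivAt_id t).smul_const d).const_add c
      have heq : (fun u => ((f ∘ w) u).1) =ᶠ[nhds t] (fun u : ℝ => c + u • d) := by
        filter_upwards [Ioo_mem_nhds ht01.1 ht01.2] with u hu
        exact hproj u ⟨le_of_lt hu.1, hu.2⟩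
      have hfst' : HasDerivAt (fun u : ℝ => c + u • d) ((deriv (f ∘ w) t).1) t :=
        hfst.congr_of_eventuallyEq heq.symm
      have hd1 : (deriv (f ∘ w) t).1 = d := hfst'.unique haff
      have : minkowskiQ n (deriv (f ∘ w) t) ≤ ‖d‖ ^ 2 := by
        rw [minkowskiQ, hd1]
        nlinarith [sq_nonneg ((deriv (f ∘ w) t).2)]
      calc q t ≤ Real.sqrt (‖d‖ ^ 2) := Real.sqrt_le_sqrt this
        _ = ‖d‖ := by rw [Real.sqrt_sq (norm_nonneg d)]
    · rw [hqdef]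
      simp only [deriv_zero_of_not_differentiableAt hdiff]
      have : minkowskiQ n (0 : EuclideanSpace ℝ (Fin n) × ℝ) = 0 := by
        simp [minkowskiQ]
      rw [this, Real.sqrt_zero]
      exact norm_nonneg d
  rw [intervalIntegral.integral_of_le hs.1]
  have hfin : MeasureTheory.volume (Set.Ioc (0:ℝ) s) ≠ ⊤ := by
    simp [Real.volume_Ioc]
  have hqint : MeasureTheory.IntegrableOn q (Set.Ioc 0 s) MeasureTheory.volume := by
    apply MeasureTheory.Measure.integrableOn_of_bounded hfin
      hqmeas.aestronglyMeasurable
    · filter_upwards [MeasureTheory.ae_restrict_mem measurableSet_Ioc] with t ht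
      rw [Real.norm_of_nonneg (hqnonneg t)]
      exact hqbound t ht
  have hconst : MeasureTheory.IntegrableOn (fun _ : ℝ => ‖d‖) (Set.Ioc 0 s)
      MeasureTheory.volume := by
    apply MeasureTheory.integrableOn_const hfin
  calc ∫ t in Set.Ioc 0 s, q t ≤ ∫ _ in Set.Ioc 0 s, ‖d‖ :=
        MeasureTheory.setIntegral_mono_on hqint hconst measurableSet_Ioc hqbound
    _ = s * ‖d‖ := by
        rw [MeasureTheory.setIntegral_const, Real.volume_real_Ioc, smul_eq_mul]
        rw [max_eq_left (by linarith [hs.1] : (0:ℝ) ≤ s - 0)]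
        ring
    _ ≤ ‖d‖ := by nlinarith [norm_nonneg d, hs.1, hs.2]

/-- Existence of lifts of affine segments through the spatial projection of a spacelike,
length-complete immersion. -/
theorem exists_segment_lift {f : M → EuclideanSpace ℝ (Fin n) × ℝ}
    (hf : ContMDiff I 𝓘(ℝ, EuclideanSpace ℝ (Fin n) × ℝ) (⊤ : ℕ∞) f)
    (hld : IsLocalDiffeomorph I I (⊤ : ℕ∞) (fun z => (f z).1))
    (hcomplete : ∀ w : ℝ → M, ContMDiffOn 𝓘(ℝ, ℝ) I (⊤ : ℕ∞) w (Set.Ico 0 1) →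
      (∃ C : ℝ, ∀ s ∈ Set.Ico (0 : ℝ) 1,
        (∫ t in (0 : ℝ)..s, Real.sqrt (minkowskiQ n (deriv (f ∘ w) t))) ≤ C) →
      ∃ W : ℝ → M, ContinuousOn W (Set.Icc 0 1) ∧
        ∀ t ∈ Set.Ico (0 : ℝ) 1, W t = w t)
    (x₀ : M) (d : EuclideanSpace ℝ (Fin n)) :
    ∃ γ : ℝ → M, ContinuousOn γ (Set.Icc 0 1) ∧ γ 0 = x₀ ∧
      ∀ s ∈ Set.Icc (0:ℝ) 1, (f (γ s)).1 = (f x₀).1 + s • d := by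
  set g : M → E := fun z => (f z).1 with hgdef
  have hgc : Continuous g := by
    have : ContMDiff I I (⊤ : ℕ∞) g :=
      ((ContinuousLinearMap.fst ℝ E ℝ).contDiff.contMDiff).comp hf
    exact this.continuous
  have hlh : IsLocalHomeomorph g := hld.isLocalHomeomorph
  set p : ℝ → E := fun s => g x₀ + s • d with hpdef
  have hpc : Continuous p := continuous_const.add (continuous_id.smul continuous_const)
  have hp : ContMDiff 𝓘(ℝ, ℝ) I (⊤ : ℕ∞) p := by
    apply ContDiff.contMDiff
    exact contDiff_const.add (contDiff_id.smul contDiff_const)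
  set A : Set ℝ := {s | s ∈ Set.Icc (0:ℝ) 1 ∧ ∃ γ : ℝ → M, ContinuousOn γ (Set.Icc 0 s) ∧
      γ 0 = x₀ ∧ ∀ t ∈ Set.Icc 0 s, g (γ t) = p t} with hAdef
  have h0A : (0:ℝ) ∈ A := by
    refine ⟨⟨le_refl 0, zero_le_one⟩, fun _ => x₀, continuousOn_const, rfl, ?_⟩
    intro t ht
    have : t = 0 := le_antisymm ht.2 ht.1
    subst this
    simp [hpdef]
  have hdc : ∀ s ∈ A, ∀ s', 0 ≤ s' → s' ≤ s → s' ∈ A := by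
    rintro s ⟨hs1, γ, hγ1, hγ2, hγ3⟩ s' h0 hs'
    exact ⟨⟨h0, hs'.trans hs1.2⟩, γ, hγ1.mono (Set.Icc_subset_Icc_right hs'), hγ2,
      fun t ht => hγ3 t ⟨ht.1, ht.2.trans hs'⟩⟩
  have hbdd : BddAbove A := ⟨1, fun s hs => hs.1.2⟩
  have hne : A.Nonempty := ⟨0, h0A⟩
  set b : ℝ := sSup A with hbdef
  have hb0 : 0 ≤ b := le_csSup hbdd h0A
  have hb1 : b ≤ 1 := csSup_le hne fun s hs => hs.1.2
  -- Main step 1: b ∈ A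
  have hbA : b ∈ A := by
    rcases eq_or_lt_of_le hb0 with hb | hb
    · rw [← hb]; exact h0A
    -- choose lifts
    have hchoice : ∀ s : ℝ, ∃ γ : ℝ → M, s ∈ A → (ContinuousOn γ (Set.Icc 0 s) ∧
        γ 0 = x₀ ∧ ∀ t ∈ Set.Icc 0 s, g (γ t) = p t) := by
      intro s
      by_cases h : s ∈ A
      · obtain ⟨_, γ, hγ⟩ := h
        exact ⟨γ, fun _ => hγ⟩
      · exact ⟨fun _ => x₀, fun h' => absurd h' h⟩
    choose Γf hΓf using hchoice
    have key : ∀ s₁ s₂, s₁ ∈ A → s₂ ∈ A → s₁ ≤ s₂ →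
        Set.EqOn (Γf s₁) (Γf s₂) (Set.Icc 0 s₁) := by
      intro s₁ s₂ h1 h2 h12
      have hA1 := hΓf s₁ h1
      have hA2 := hΓf s₂ h2
      refine lift_unique hlh isPreconnected_Icc hA1.1
        (hA2.1.mono (Set.Icc_subset_Icc_right h12)) ?_
        (Set.left_mem_Icc.mpr (h1.1.1)) (hA1.2.1.trans hA2.2.1.symm)
      intro t ht
      show g (Γf s₁ t) = g (Γf s₂ t)
      rw [hA1.2.2 t ht, hA2.2.2 t ⟨ht.1, ht.2.trans h12⟩]
    have hmidA : ∀ s ∈ Set.Ico 0 b, (s+b)/2 ∈ A := by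
      intro s hs
      obtain ⟨t, htA, hlt⟩ := exists_lt_of_lt_csSup hne
        (show (s+b)/2 < b by linarith [hs.1, hs.2])
      exact hdc t htA _ (by linarith [hs.1, hs.2]) (le_of_lt hlt)
    set Γ : ℝ → M := fun s => Γf ((s+b)/2) s with hΓdef
    have hΓeq : ∀ m ∈ A, ∀ s ∈ Set.Ico 0 b, s ≤ m → Γ s = Γf m s := by
      intro m hm s hs hsm
      have hsmid : (s+b)/2 ∈ A := hmidA s hs
      have hs2 : s ∈ Set.Icc 0 ((s+b)/2) := ⟨hs.1, by linarith [hs.2]⟩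
      rcases le_total ((s+b)/2) m with h | h
      · exact key _ _ hsmid hm h hs2
      · exact (key m _ hm hsmid h ⟨hs.1, hsm⟩).symm
    have hΓp : ∀ s ∈ Set.Ico 0 b, g (Γ s) = p s := by
      intro s hs
      exact (hΓf _ (hmidA s hs)).2.2 s ⟨hs.1, by linarith [hs.2]⟩
    have h0Ico : (0:ℝ) ∈ Set.Ico 0 b := ⟨le_refl 0, hb⟩
    have hΓ0 : Γ 0 = x₀ := (hΓf _ (hmidA 0 h0Ico)).2.1
    have hΓcont : ContinuousOn Γ (Set.Ico 0 b) := by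
      intro s₀ hs₀
      set m : ℝ := (s₀+b)/2 with hmdef
      have hmA : m ∈ A := hmidA s₀ hs₀
      have hs₀m : s₀ < m := by simp only [hmdef]; linarith [hs₀.2]
      have h1 : ContinuousWithinAt (Γf m) (Set.Icc 0 m) s₀ :=
        (hΓf m hmA).1 s₀ ⟨hs₀.1, le_of_lt hs₀m⟩
      have h2 : ContinuousWithinAt (Γf m) (Set.Ico 0 b ∩ Set.Iio m) s₀ :=
        h1.mono fun t ht => ⟨ht.1.1, le_of_lt ht.2⟩
      have h3 : ContinuousWithinAt Γ (Set.Ico 0 b ∩ Set.Iio m) s₀ := by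
        apply h2.congr
        · intro t ht
          exact hΓeq m hmA t ht.1 (le_of_lt ht.2)
        · exact hΓeq m hmA s₀ hs₀ (le_of_lt hs₀m)
      rw [← continuousWithinAt_inter (Iio_mem_nhds hs₀m)]
      exact h3
    have hΓsm : ContMDiffOn 𝓘(ℝ, ℝ) I (⊤ : ℕ∞) Γ (Set.Ico 0 b) :=
      lift_contMDiffOn hld hp hΓcont hΓp
    -- reparametrize to [0,1)
    set w : ℝ → M := fun t => Γ (b * t) with hwdef
    have hmul : ContMDiff 𝓘(ℝ, ℝ) 𝓘(ℝ, ℝ) (⊤ : ℕ∞) (fun t : ℝ => b * t) :=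
      ContDiff.contMDiff (contDiff_const.mul contDiff_id)
    have hmaps : Set.MapsTo (fun t : ℝ => b * t) (Set.Ico 0 1) (Set.Ico 0 b) := by
      intro t ht
      constructor
      · exact mul_nonneg (le_of_lt hb) ht.1
      · calc b * t < b * 1 := by exact mul_lt_mul_of_pos_left ht.2 hb
          _ = b := mul_one b
    have hw : ContMDiffOn 𝓘(ℝ, ℝ) I (⊤ : ℕ∞) w (Set.Ico 0 1) :=
      hΓsm.comp hmul.contMDiffOn hmaps
    have hproj : ∀ t ∈ Set.Ico (0:ℝ) 1, (f (w t)).1 = g x₀ + t • (b • d) := by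
      intro t ht
      have := hΓp (b * t) (hmaps ht)
      rw [hwdef]
      show (f (Γ (b * t))).1 = g x₀ + t • (b • d)
      rw [show (f (Γ (b * t))).1 = g (Γ (b * t)) from rfl, this]
      rw [hpdef]
      simp only [smul_smul]
      rw [mul_comm]
    obtain ⟨W, hWc, hWeq⟩ := hcomplete w hw (length_bound hw hproj)
    set γb : ℝ → M := fun s => W (s / b) with hγbdef
    have hdivmaps : Set.MapsTo (fun s : ℝ => s / b) (Set.Icc 0 b) (Set.Icc 0 1) := by
      intro s hs
      exact ⟨div_nonneg hs.1 (le_of_lt hb), (div_le_one hb).mpr hs.2⟩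
    have hγbc : ContinuousOn γb (Set.Icc 0 b) :=
      hWc.comp (continuous_id.div_const b).continuousOn hdivmaps
    have hγbΓ : ∀ s ∈ Set.Ico 0 b, γb s = Γ s := by
      intro s hs
      have h1 : s / b ∈ Set.Ico 0 1 :=
        ⟨div_nonneg hs.1 (le_of_lt hb), (div_lt_one hb).mpr hs.2⟩
      rw [hγbdef]
      show W (s / b) = Γ s
      rw [hWeq _ h1]
      show Γ (b * (s / b)) = Γ s
      rw [mul_comm, div_mul_cancel₀ s (ne_of_gt hb)]
    have hγb0 : γb 0 = x₀ := by rw [hγbΓ 0 h0Ico, hΓ0]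
    have hγbp : ∀ s ∈ Set.Icc 0 b, g (γb s) = p s := by
      intro s hs
      rcases lt_or_eq_of_le hs.2 with h | h
      · rw [hγbΓ s ⟨hs.1, h⟩]; exact hΓp s ⟨hs.1, h⟩
      · subst h
        have hnebot : (nhdsWithin b (Set.Ico 0 b)).NeBot := by
          rw [← mem_closure_iff_nhdsWithin_neBot, closure_Ico (ne_of_lt hb)]
          exact ⟨hb0, le_refl b⟩
        have h1 : Filter.Tendsto (fun t => g (γb t)) (nhdsWithin b (Set.Ico 0 b))
            (nhds (g (γb b))) := by
          apply Filter.Tendsto.comp hgc.continuousAt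
          exact ((hγbc b ⟨hb0, le_refl b⟩).mono Set.Ico_subset_Icc_self)
        have h2 : Filter.Tendsto p (nhdsWithin b (Set.Ico 0 b)) (nhds (p b)) :=
          hpc.continuousWithinAt
        have h3 : (fun t => g (γb t)) =ᶠ[nhdsWithin b (Set.Ico 0 b)] p := by
          filter_upwards [self_mem_nhdsWithin] with t ht
          rw [hγbΓ t ht]; exact hΓp t ht
        exact tendsto_nhds_unique (h1.congr' h3) h2
    exact ⟨⟨hb0, hb1⟩, γb, hγbc, hγb0, hγbp⟩
  -- Main step 2: b = 1
  have hb1' : b = 1 := by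
    by_contra hneq
    have hblt : b < 1 := lt_of_le_of_ne hb1 hneq
    obtain ⟨_, γb, hγbc, hγb0, hγbp⟩ := hbA
    set z : M := γb b with hz
    obtain ⟨P, hzP, hgP⟩ := hlh z
    have hpbP : p b ∈ P.target := by
      rw [← hγbp b ⟨hb0, le_refl b⟩, hgP]
      exact P.map_source hzP
    have hev : ∀ᶠ s in nhds b, p s ∈ P.target :=
      hpc.continuousAt.preimage_mem_nhds (P.open_target.mem_nhds hpbP)
    obtain ⟨ε, hε, hball⟩ := Metric.eventually_nhds_iff.mp hev
    set ε' : ℝ := min (ε/2) ((1 - b)/2) with hε'def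
    have hε'pos : 0 < ε' := lt_min (by linarith) (by linarith)
    have hε'le : b + ε' ≤ 1 := by
      have := min_le_right (ε/2) ((1 - b)/2)
      simp only [hε'def]
      linarith [this]
    have htarget : ∀ s ∈ Set.Icc b (b+ε'), p s ∈ P.target := by
      intro s hs
      apply hball
      rw [Real.dist_eq, abs_lt]
      have := min_le_left (ε/2) ((1 - b)/2)
      constructor <;> [skip; skip] <;>
        simp only [hε'def] at hs ⊢ <;>
        [linarith [hs.1]; linarith [hs.2, this]]
    set γ' : ℝ → M := fun s => if s ≤ b then γb s else P.symm (p s) with hγ'def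
    have hpiece1 : Set.EqOn γ' γb (Set.Icc 0 b) := by
      intro s hs
      simp only [hγ'def, if_pos hs.2]
    have hpiece2 : Set.EqOn γ' (fun s => P.symm (p s)) (Set.Icc b (b+ε')) := by
      intro s hs
      rcases lt_or_eq_of_le hs.1 with h | h
      · simp only [hγ'def, if_neg (not_le.mpr h)]
      · rw [hγ'def]
        simp only [← h, if_pos (le_refl b)]
        show γb b = P.symm (p b)
        rw [← hγbp b ⟨hb0, le_refl b⟩, hgP]
        exact (P.left_inv hzP).symm
    have hcont1 : ContinuousOn γ' (Set.Icc 0 b) :=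
      (hγbc.congr hpiece1)
    have hcont2 : ContinuousOn γ' (Set.Icc b (b+ε')) := by
      apply ContinuousOn.congr ?_ hpiece2
      exact P.continuousOn_symm.comp hpc.continuousOn htarget
    have hcont : ContinuousOn γ' (Set.Icc 0 (b+ε')) := by
      rw [← Set.Icc_union_Icc_eq_Icc hb0 (by linarith : b ≤ b + ε')]
      exact myContinuousOn_union isClosed_Icc isClosed_Icc hcont1 hcont2
    have hmem : b + ε' ∈ A := by
      refine ⟨⟨by linarith, hε'le⟩, γ', hcont, ?_, ?_⟩
      · rw [hpiece1 ⟨le_refl 0, hb0⟩]; exact hγb0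
      · intro t ht
        rcases le_or_gt t b with h | h
        · rw [hpiece1 ⟨ht.1, h⟩]; exact hγbp t ⟨ht.1, h⟩
        · rw [hpiece2 ⟨le_of_lt h, ht.2⟩]
          show g (P.symm (p t)) = p t
          rw [hgP]
          exact P.right_inv (htarget t ⟨le_of_lt h, ht.2⟩)
    have := le_csSup hbdd hmem
    linarith
  obtain ⟨_, γ, hγc, hγ0, hγp⟩ := hbA
  rw [hb1'] at hγc hγp
  exact ⟨γ, hγc, hγ0, fun s hs => hγp s hs⟩

/-- A local homeomorphism all of whose radial segments from a fixed basepoint lift,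
with continuous parametric dependence, is bijective (base `ℝⁿ`, connected total space). -/
theorem bijective_of_lifts {g : M → EuclideanSpace ℝ (Fin n)} [ConnectedSpace M]
    (hgc : Continuous g) (hlh : IsLocalHomeomorph g) (x₀ : M)
    (hLift : ∀ y : EuclideanSpace ℝ (Fin n), ∃ γ : ℝ → M,
      ContinuousOn γ (Set.Icc 0 1) ∧ γ 0 = x₀ ∧
      ∀ s ∈ Set.Icc (0:ℝ) 1, g (γ s) = g x₀ + s • (y - g x₀)) :
    Function.Bijective g := by
  classical
  set y₀ : E := g x₀ with hy₀
  choose L hL1 hL2 hL3 using hLift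
  set H : E → ℝ → E := fun y s => y₀ + s • (y - y₀) with hHdef
  have hHcont : Continuous fun q : E × ℝ => H q.1 q.2 := by
    apply continuous_const.add
    exact continuous_snd.smul (continuous_fst.sub continuous_const)
  set h : E → M := fun y => L y 1 with hhdef
  have hgh : ∀ y, g (h y) = y := by
    intro y
    have := hL3 y 1 ⟨zero_le_one, le_refl 1⟩
    rw [hhdef]
    show g (L y 1) = y
    rw [this, one_smul]
    abel
  have hpar : ∀ ystar : E, ContinuousAt h ystar := by
    intro ys
    set γs : ℝ → M := L ys with hγsdef
    set B : Set ℝ := {s | s ∈ Set.Icc (0:ℝ) 1 ∧ ∃ ε : ℝ, 0 < ε ∧ ∃ Λ : E → ℝ → M,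
      ContinuousOn (fun q : E × ℝ => Λ q.1 q.2) (Metric.ball ys ε ×ˢ Set.Icc 0 s) ∧
      ∀ y ∈ Metric.ball ys ε, Λ y 0 = x₀ ∧ ∀ t ∈ Set.Icc 0 s, g (Λ y t) = H y t} with hBdef
    have h0B : (0:ℝ) ∈ B := by
      refine ⟨⟨le_refl 0, zero_le_one⟩, 1, one_pos, fun _ _ => x₀, continuousOn_const,
        fun y hy => ⟨rfl, ?_⟩⟩
      intro t ht
      have : t = 0 := le_antisymm ht.2 ht.1
      subst this
      show g x₀ = H y 0
      simp [hHdef, hy₀]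
    have hBbdd : BddAbove B := ⟨1, fun s hs => hs.1.2⟩
    have hBne : B.Nonempty := ⟨0, h0B⟩
    set b : ℝ := sSup B with hbdef
    have hb0 : 0 ≤ b := le_csSup hBbdd h0B
    have hb1 : b ≤ 1 := csSup_le hBne fun s hs => hs.1.2
    obtain ⟨P, hbP, hgP⟩ := hlh (γs b)
    have hγsc : ContinuousWithinAt γs (Set.Icc 0 1) b := hL1 ys b ⟨hb0, hb1⟩
    have hmem : γs ⁻¹' P.source ∈ nhdsWithin b (Set.Icc 0 1) :=
      hγsc (P.open_source.mem_nhds hbP)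
    obtain ⟨δ, hδ, hδsub⟩ := Metric.mem_nhdsWithin_iff.mp hmem
    have hsub : ∀ t ∈ Set.Icc (0:ℝ) 1, |t - b| < δ → γs t ∈ P.source := by
      intro t ht hdist
      apply hδsub
      exact ⟨by rw [Metric.mem_ball, Real.dist_eq]; exact hdist, ht⟩
    obtain ⟨s₀, hs₀B, hs₀lt⟩ : ∃ s₀ ∈ B, b - δ/2 < s₀ := by
      rcases lt_or_ge (b - δ/2) 0 with hcase | hcase
      · exact ⟨0, h0B, hcase⟩
      · exact exists_lt_of_lt_csSup hBne (show b - δ/2 < b by linarith)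
    have hs₀le : s₀ ≤ b := le_csSup hBbdd hs₀B
    have hs₀mem : s₀ ∈ Set.Icc (0:ℝ) 1 := hs₀B.1
    set b' : ℝ := min (b + δ/2) 1 with hb'def
    have hs₀b' : s₀ ≤ b' := le_min (by linarith) hs₀mem.2
    have hb'1 : b' ≤ 1 := min_le_right _ _
    have hb'0 : 0 ≤ b' := hs₀mem.1.trans hs₀b'
    have hIccsub : Set.Icc s₀ b' ⊆ Set.Icc 0 1 := Set.Icc_subset_Icc hs₀mem.1 hb'1
    have hPdist : ∀ t ∈ Set.Icc s₀ b', γs t ∈ P.source := by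
      intro t ht
      apply hsub t (hIccsub ht)
      rw [abs_lt]
      have h2 : t ≤ b + δ/2 := ht.2.trans (min_le_left _ _)
      constructor
      · linarith [ht.1]
      · linarith
    set K : Set (EuclideanSpace ℝ (Fin n)) := (fun t => H ys t) '' Set.Icc s₀ b' with hKdef
    have hKcompact : IsCompact K := isCompact_Icc.image
      (hHcont.comp (continuous_const.prodMk continuous_id))
    have hKsub : K ⊆ P.target := by
      rintro _ ⟨t, ht, rfl⟩
      show y₀ + t • (ys - y₀) ∈ P.target
      rw [← hL3 ys t (hIccsub ht), hgP]
      exact P.map_source (hPdist t ht)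
    obtain ⟨ρ, hρ, hρsub⟩ := hKcompact.exists_thickening_subset_open P.open_target hKsub
    have hHtarget : ∀ y, dist y ys < ρ → ∀ t ∈ Set.Icc s₀ b', H y t ∈ P.target := by
      intro y hy t ht
      apply hρsub
      rw [Metric.mem_thickening_iff]
      refine ⟨H ys t, ⟨t, ht, rfl⟩, ?_⟩
      have hdiff : H y t - H ys t = t • (y - ys) := by
        simp only [hHdef]
        rw [add_sub_add_left_eq_sub, ← smul_sub]
        congr 1
        abel
      rw [dist_eq_norm, hdiff, norm_smul]
      have ht0 : 0 ≤ t := hs₀mem.1.trans ht.1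
      have ht1 : t ≤ 1 := ht.2.trans hb'1
      calc ‖t‖ * ‖y - ys‖ ≤ 1 * ‖y - ys‖ := by
            apply mul_le_mul_of_nonneg_right _ (norm_nonneg _)
            rw [Real.norm_of_nonneg ht0]; exact ht1
        _ = ‖y - ys‖ := one_mul _
        _ < ρ := by rwa [← dist_eq_norm]
    obtain ⟨_, ε₀, hε₀, Λ₀, hΛ₀c, hΛ₀⟩ := hs₀B
    have hslice : ContinuousAt (fun y => Λ₀ y s₀) ys := by
      have h1 : ContinuousOn (fun y => Λ₀ y s₀) (Metric.ball ys ε₀) := by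
        apply hΛ₀c.comp (continuous_id.prodMk continuous_const).continuousOn
        intro y hy
        exact ⟨hy, ⟨hs₀mem.1, le_refl s₀⟩⟩
      exact h1.continuousAt (Metric.ball_mem_nhds ys hε₀)
    have hsliceys : Λ₀ ys s₀ = γs s₀ := by
      have hcont : ContinuousOn (fun t => Λ₀ ys t) (Set.Icc 0 s₀) := by
        apply hΛ₀c.comp (continuous_const.prodMk continuous_id).continuousOn
        intro t ht
        exact ⟨Metric.mem_ball_self hε₀, ht⟩
      have huniq : Set.EqOn (fun t => Λ₀ ys t) γs (Set.Icc 0 s₀) := by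
        refine lift_unique hlh isPreconnected_Icc hcont
          ((hL1 ys).mono (Set.Icc_subset_Icc_right hs₀mem.2)) ?_
          (Set.left_mem_Icc.mpr hs₀mem.1) ?_
        · intro t ht
          show g (Λ₀ ys t) = g (γs t)
          rw [(hΛ₀ ys (Metric.mem_ball_self hε₀)).2 t ht,
            hL3 ys t ⟨ht.1, ht.2.trans hs₀mem.2⟩]
        · rw [(hΛ₀ ys (Metric.mem_ball_self hε₀)).1]
          exact (hL2 ys).symm
      exact huniq ⟨hs₀mem.1, le_refl s₀⟩
    have hγs₀P : γs s₀ ∈ P.source := hPdist s₀ ⟨le_refl s₀, hs₀b'⟩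
    have hev : (fun y => Λ₀ y s₀) ⁻¹' P.source ∈ nhds ys :=
      hslice.preimage_mem_nhds (P.open_source.mem_nhds (by rw [hsliceys]; exact hγs₀P))
    obtain ⟨ε₁, hε₁, hε₁sub⟩ := Metric.mem_nhds_iff.mp hev
    set ε : ℝ := min (min ε₀ ε₁) ρ with hεdef
    have hεpos : 0 < ε := lt_min (lt_min hε₀ hε₁) hρ
    have hεε₀ : ε ≤ ε₀ := (min_le_left _ _).trans (min_le_left _ _)
    have hεε₁ : ε ≤ ε₁ := (min_le_left _ _).trans (min_le_right _ _)
    have hερ : ε ≤ ρ := min_le_right _ _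
    set Λ' : EuclideanSpace ℝ (Fin n) → ℝ → M :=
      fun y t => if t ≤ s₀ then Λ₀ y t else P.symm (H y t) with hΛ'def
    have hseam : ∀ y ∈ Metric.ball ys ε, Λ₀ y s₀ = P.symm (H y s₀) := by
      intro y hy
      have h1 : Λ₀ y s₀ ∈ P.source :=
        hε₁sub (Metric.mem_ball.mpr (lt_of_lt_of_le (Metric.mem_ball.mp hy) hεε₁))
      have h2 : g (Λ₀ y s₀) = H y s₀ :=
        (hΛ₀ y (Metric.ball_subset_ball hεε₀ hy)).2 s₀ ⟨hs₀mem.1, le_refl _⟩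
      rw [← h2, hgP]
      exact (P.left_inv h1).symm
    have hpc1 : ContinuousOn (fun q : EuclideanSpace ℝ (Fin n) × ℝ => Λ' q.1 q.2)
        (Metric.ball ys ε ×ˢ Set.Icc 0 s₀) := by
      apply ContinuousOn.congr
        (hΛ₀c.mono (Set.prod_mono (Metric.ball_subset_ball hεε₀) subset_rfl))
      rintro ⟨y, t⟩ ⟨hy, ht⟩
      simp only [hΛ'def, if_pos ht.2]
    have hpc2 : ContinuousOn (fun q : EuclideanSpace ℝ (Fin n) × ℝ => Λ' q.1 q.2)
        (Metric.ball ys ε ×ˢ Set.Icc s₀ b') := by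
      have hcc : ContinuousOn (fun q : EuclideanSpace ℝ (Fin n) × ℝ => P.symm (H q.1 q.2))
          (Metric.ball ys ε ×ˢ Set.Icc s₀ b') := by
        apply P.continuousOn_symm.comp hHcont.continuousOn
        rintro ⟨y, t⟩ ⟨hy, ht⟩
        exact hHtarget y (lt_of_lt_of_le (Metric.mem_ball.mp hy) hερ) t ht
      apply ContinuousOn.congr hcc
      rintro ⟨y, t⟩ ⟨hy, ht⟩
      rcases lt_or_eq_of_le ht.1 with hlt | heq
      · simp only [hΛ'def, if_neg (not_le.mpr hlt)]
      · subst heq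
        simp only [hΛ'def, if_pos (le_refl s₀)]
        exact hseam y hy
    have hjoint : ContinuousOn (fun q : EuclideanSpace ℝ (Fin n) × ℝ => Λ' q.1 q.2)
        (Metric.ball ys ε ×ˢ Set.Icc 0 b') := by
      have hdecomp : Set.Icc (0:ℝ) b' = Set.Icc 0 s₀ ∪ Set.Icc s₀ b' :=
        (Set.Icc_union_Icc_eq_Icc hs₀mem.1 hs₀b').symm
      rw [hdecomp, Set.prod_union]
      apply myContinuousOn_union' ?_ ?_ hpc1 hpc2
      · rintro ⟨y, t⟩ ⟨hy, ht⟩ hnot hcl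
        rw [closure_prod_eq] at hcl
        have h1 : t ∈ closure (Set.Icc (0:ℝ) s₀) := hcl.2
        rw [isClosed_Icc.closure_eq] at h1
        exact hnot ⟨hy, h1⟩
      · rintro ⟨y, t⟩ ⟨hy, ht⟩ hnot hcl
        rw [closure_prod_eq] at hcl
        have h1 : t ∈ closure (Set.Icc s₀ b') := hcl.2
        rw [isClosed_Icc.closure_eq] at h1
        exact hnot ⟨hy, h1⟩
    have hb'B : b' ∈ B := by
      refine ⟨⟨hb'0, hb'1⟩, ε, hεpos, Λ', hjoint, ?_⟩
      intro y hy
      constructor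
      · show Λ' y 0 = x₀
        simp only [hΛ'def, if_pos hs₀mem.1]
        exact (hΛ₀ y (Metric.ball_subset_ball hεε₀ hy)).1
      · intro t ht
        by_cases hts : t ≤ s₀
        · show g (Λ' y t) = H y t
          simp only [hΛ'def, if_pos hts]
          exact (hΛ₀ y (Metric.ball_subset_ball hεε₀ hy)).2 t ⟨ht.1, hts⟩
        · show g (Λ' y t) = H y t
          simp only [hΛ'def, if_neg hts]
          rw [hgP]
          exact P.right_inv (hHtarget y (lt_of_lt_of_le (Metric.mem_ball.mp hy) hερ) t
            ⟨le_of_lt (not_le.mp hts), ht.2⟩)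
    have hble : b' ≤ b := le_csSup hBbdd hb'B
    have hbeq : b' = 1 := by
      rcases lt_or_ge b 1 with hcase | hcase
      · exfalso
        have h2 : b < b' := lt_min (by linarith) hcase
        linarith
      · have : b = 1 := le_antisymm hb1 hcase
        rw [hb'def, this]
        simp
        linarith
    have h1B : (1:ℝ) ∈ B := hbeq ▸ hb'B
    obtain ⟨_, ε₂, hε₂, Λ, hΛc, hΛ⟩ := h1B
    have hΛslice : ∀ y ∈ Metric.ball ys ε₂, Λ y 1 = h y := by
      intro y hy
      have hcont : ContinuousOn (fun t => Λ y t) (Set.Icc 0 1) := by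
        apply hΛc.comp (continuous_const.prodMk continuous_id).continuousOn
        intro t ht
        exact ⟨hy, ht⟩
      have huniq : Set.EqOn (fun t => Λ y t) (L y) (Set.Icc 0 1) := by
        refine lift_unique hlh isPreconnected_Icc hcont (hL1 y) ?_
          (Set.left_mem_Icc.mpr zero_le_one) ?_
        · intro t ht
          show g (Λ y t) = g (L y t)
          rw [(hΛ y hy).2 t ht, hL3 y t ht]
        · rw [(hΛ y hy).1]
          exact (hL2 y).symm
      exact huniq ⟨zero_le_one, le_refl 1⟩
    have hcΛ1 : ContinuousAt (fun y => Λ y 1) ys := by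
      have h1 : ContinuousOn (fun y => Λ y 1) (Metric.ball ys ε₂) := by
        apply hΛc.comp (continuous_id.prodMk continuous_const).continuousOn
        intro y hy
        exact ⟨hy, ⟨zero_le_one, le_refl 1⟩⟩
      exact h1.continuousAt (Metric.ball_mem_nhds ys hε₂)
    apply hcΛ1.congr
    filter_upwards [Metric.ball_mem_nhds ys hε₂] with y hy
    exact (hΛslice y hy)
  have hcont_h : Continuous h := continuous_iff_continuousAt.mpr hpar
  have hhy₀ : h y₀ = x₀ := by
    have huniq : Set.EqOn (L y₀) (fun _ => x₀) (Set.Icc 0 1) := by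
      refine lift_unique hlh isPreconnected_Icc (hL1 y₀) continuousOn_const ?_
        (Set.left_mem_Icc.mpr zero_le_one) (hL2 y₀)
      intro t ht
      show g (L y₀ t) = g x₀
      rw [hL3 y₀ t ht]
      simp [hy₀]
    exact huniq ⟨zero_le_one, le_refl 1⟩
  set S : Set M := {x | h (g x) = x} with hSdef
  have hSclosed : IsClosed S := isClosed_eq (hcont_h.comp hgc) continuous_id
  have hSopen : IsOpen S := by
    rw [isOpen_iff_mem_nhds]
    intro x hx
    obtain ⟨P, hxP, hgP⟩ := hlh x
    have hhx : h (g x) = x := hx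
    have hU : IsOpen (P.source ∩ (fun x' => h (g x')) ⁻¹' P.source) :=
      P.open_source.inter ((hcont_h.comp hgc).isOpen_preimage _ P.open_source)
    have hxU : x ∈ P.source ∩ (fun x' => h (g x')) ⁻¹' P.source := by
      refine ⟨hxP, ?_⟩
      show h (g x) ∈ P.source
      rw [hhx]; exact hxP
    apply Filter.mem_of_superset (hU.mem_nhds hxU)
    intro x' hx'
    show h (g x') = x'
    apply P.injOn
    · exact hx'.2
    · exact hx'.1
    · show P (h (g x')) = P x'
      rw [← hgP]
      exact hgh (g x')
  have hSuniv : S = Set.univ := by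
    have : x₀ ∈ S := by
      show h (g x₀) = x₀
      rw [← hy₀, hhy₀]
    exact (IsClopen.eq_univ ⟨hSclosed, hSopen⟩ ⟨x₀, this⟩)
  have hS : ∀ x, h (g x) = x := by
    intro x
    have : x ∈ S := hSuniv ▸ Set.mem_univ x
    exact this
  constructor
  · intro x₁ x₂ hx
    rw [← hS x₁, ← hS x₂, hx]
  · exact fun y => ⟨h y, hgh y⟩

end Lifting

end SpacelikeAux

open SpacelikeAux in
/-- A spacelike, length-complete immersion `f` of a nonempty connected smooth
`n`-manifold into Minkowski space `ℝⁿ × ℝ` is a smooth embedding, and the projection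
`pr ∘ f : M → ℝⁿ` is a diffeomorphism. -/
theorem spacelike_long_immersion_embedding
    (n : ℕ) (hn : 1 ≤ n)
    (M : Type*) [TopologicalSpace M] [T2Space M] [Nonempty M] [ConnectedSpace M]
    [ChartedSpace (EuclideanSpace ℝ (Fin n)) M] [IsManifold (𝓡 n) (⊤ : ℕ∞) M]
    (f : M → EuclideanSpace ℝ (Fin n) × ℝ)
    (hf : ContMDiff (𝓡 n) 𝓘(ℝ, EuclideanSpace ℝ (Fin n) × ℝ) (⊤ : ℕ∞) f)
    (hspace : ∀ (x : M) (v : TangentSpace (𝓡 n) x), v ≠ 0 →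
      0 < minkowskiQ n (mfderiv (𝓡 n) 𝓘(ℝ, EuclideanSpace ℝ (Fin n) × ℝ) f x v))
    (hcomplete : ∀ w : ℝ → M, ContMDiffOn 𝓘(ℝ, ℝ) (𝓡 n) (⊤ : ℕ∞) w (Set.Ico 0 1) →
      (∃ C : ℝ, ∀ s ∈ Set.Ico (0 : ℝ) 1,
        (∫ t in (0 : ℝ)..s, Real.sqrt (minkowskiQ n (deriv (f ∘ w) t))) ≤ C) →
      ∃ W : ℝ → M, ContinuousOn W (Set.Icc 0 1) ∧
        ∀ t ∈ Set.Ico (0 : ℝ) 1, W t = w t) :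
    Topology.IsEmbedding f ∧
    ∃ e : Diffeomorph (𝓡 n) (𝓡 n) M (EuclideanSpace ℝ (Fin n)) (⊤ : ℕ∞),
      ⇑e = fun x => (f x).1 := by
  set g : M → EuclideanSpace ℝ (Fin n) := fun x => (f x).1 with hgdef
  have hg : ContMDiff (𝓡 n) (𝓡 n) (⊤ : ℕ∞) g :=
    ((ContinuousLinearMap.fst ℝ (EuclideanSpace ℝ (Fin n)) ℝ).contDiff.contMDiff).comp hf
  have hld : IsLocalDiffeomorph (𝓡 n) (𝓡 n) (⊤ : ℕ∞) g :=
    isLocalDiffeomorph_of_bijective_mfderiv hg (mfderiv_fst_bijective hf hspace)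
  have hlh : IsLocalHomeomorph g := hld.isLocalHomeomorph
  obtain ⟨x₀⟩ := (inferInstance : Nonempty M)
  have hLift : ∀ y : EuclideanSpace ℝ (Fin n), ∃ γ : ℝ → M,
      ContinuousOn γ (Set.Icc 0 1) ∧ γ 0 = x₀ ∧
      ∀ s ∈ Set.Icc (0:ℝ) 1, g (γ s) = g x₀ + s • (y - g x₀) := by
    intro y
    obtain ⟨γ, h1, h2, h3⟩ := exists_segment_lift hf hld hcomplete x₀ (y - g x₀)
    exact ⟨γ, h1, h2, h3⟩
  have hbij : Function.Bijective g := bijective_of_lifts hg.continuous hlh x₀ hLift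
  constructor
  · have hgemb : Topology.IsEmbedding g :=
      (Topology.IsOpenEmbedding.of_continuous_injective_isOpenMap
        hg.continuous hbij.1 hld.isOpenMap).isEmbedding
    exact Topology.IsEmbedding.of_comp hf.continuous continuous_fst hgemb
  · exact ⟨IsLocalDiffeomorph.diffeomorphOfBijective hld hbij, rfl⟩
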